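/- Fix T > 0 and Q > 0. Let θ, η : [0,T] → ℝ be continuously differentiable with η(t) > 0, θ'(t) ≤ 0, and η'(t) ≤ 0 for all t ∈ [0,T]. Let η̄ = min_{t∈[0,T]} η(t) and let θ̄ > 0 be a constant with θ̄ ≥ −θ'(t) for all t; set γ = θ̄/(2η̄) and assume √γ·T < π. If ζ : [0,T] → ℝ is twice continuously differentiable and satisfies 2η(t)ζ''(t) + 2η'(t)ζ'(t) − θ'(t)ζ(t) = 0 for all t ∈ [0,T], ζ(0) = Q, and ζ(T) = 0, then ζ(t) ≥ 0 for all t, at every t with ζ'(t) ≤ 0 one has ζ''(t) ≤ 0 (the solution is never locally convex along a nonincreasing phase), and ζ(t) ≥ Q·(1 − t/T) for all t ∈ [0,T] (the solution is bounded below by the TWAP strategy). -/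

import Mathlib

open Set

lemma picone_aux (a b ηbar θbar t₀ : ℝ) (hab : a < b) (hηbar : 0 < ηbar) (hθbar : 0 < θbar)
    (hγT : Real.sqrt (θbar / (2 * ηbar)) * (b - a) < Real.pi)
    (η η' θ' φ φ' φ'' : ℝ → ℝ)
    (hη : ∀ t ∈ Icc a b, HasDerivAt η (η' t) t)
    (hφ1 : ∀ t ∈ Icc a b, HasDerivAt φ (φ' t) t)
    (hφ2 : ∀ t ∈ Icc a b, HasDerivAt φ' (φ'' t) t)
    (hηlb : ∀ t ∈ Icc a b, ηbar ≤ η t)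
    (hq : ∀ t ∈ Icc a b, -θ' t ≤ θbar)
    (hODE : ∀ t ∈ Icc a b, 0 ≤ 2 * η t * φ'' t + 2 * η' t * φ' t - θ' t * φ t)
    (hpos : ∀ t ∈ Ioo a b, 0 ≤ φ t)
    (ht₀ : t₀ ∈ Ioo a b) (ht₀pos : 0 < φ t₀)
    (hφa : φ a = 0) (hφb : φ b = 0) : False := by
  set γ : ℝ := θbar / (2 * ηbar) with hγdef
  have hγpos : 0 < γ := div_pos hθbar (by linarith)
  set ω : ℝ := Real.sqrt γ with hωdef
  have hωpos : 0 < ω := Real.sqrt_pos.2 hγpos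
  have hω2 : ω ^ 2 = γ := Real.sq_sqrt hγpos.le
  have h2ηγ : 2 * ηbar * γ = θbar := by
    rw [hγdef]; field_simp
  set c : ℝ := (a + b) / 2 with hcdef
  set u : ℝ → ℝ := fun t => Real.cos (ω * (t - c)) with hudef
  set v : ℝ → ℝ := fun t => -(ω * Real.sin (ω * (t - c))) with hvdef
  have hlin : ∀ t : ℝ, HasDerivAt (fun s => ω * (s - c)) ω t := by
    intro t
    simpa using ((hasDerivAt_id t).sub_const c).const_mul ω
  have hu : ∀ t : ℝ, HasDerivAt u (v t) t := by
    intro t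
    have := (Real.hasDerivAt_cos (ω * (t - c))).comp t (hlin t)
    exact this.congr_deriv (by simp only [hvdef]; ring)
  have hv : ∀ t : ℝ, HasDerivAt v (-(ω ^ 2) * u t) t := by
    intro t
    have := (((Real.hasDerivAt_sin (ω * (t - c))).comp t (hlin t)).const_mul ω).neg
    refine this.congr_deriv ?_
    simp [hudef]
    ring
  have hupos : ∀ t ∈ Icc a b, 0 < u t := by
    intro t ht
    apply Real.cos_pos_of_mem_Ioo
    have e1 : ω * (a - c) = -(ω * (b - a)) / 2 := by rw [hcdef]; ring
    have e2 : ω * (b - c) = (ω * (b - a)) / 2 := by rw [hcdef]; ring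
    have h1 : ω * (a - c) ≤ ω * (t - c) :=
      mul_le_mul_of_nonneg_left (by linarith [ht.1]) hωpos.le
    have h2 : ω * (t - c) ≤ ω * (b - c) :=
      mul_le_mul_of_nonneg_left (by linarith [ht.2]) hωpos.le
    constructor
    · rw [e1] at h1; linarith
    · rw [e2] at h2; linarith
  set F : ℝ → ℝ := fun t => 2 * η t * φ t * φ' t - 2 * ηbar * φ t ^ 2 * v t / u t with hFdef
  set Fd : ℝ → ℝ := fun t =>
    (2 * η t * φ'' t + 2 * η' t * φ' t - θ' t * φ t) * φ t + (θbar + θ' t) * φ t ^ 2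
      + (2 * η t - 2 * ηbar) * φ' t ^ 2 + 2 * ηbar * (φ' t - φ t * (v t / u t)) ^ 2 with hFddef
  have hF : ∀ t ∈ Icc a b, HasDerivAt F (Fd t) t := by
    intro t ht
    have hu0 : u t ≠ 0 := (hupos t ht).ne'
    have hA : HasDerivAt (fun s => 2 * η s * φ s * φ' s)
        ((2 * η' t * φ t + 2 * η t * φ' t) * φ' t + 2 * η t * φ t * φ'' t) t := by
      have h1 : HasDerivAt (fun s => 2 * η s * φ s) (2 * η' t * φ t + 2 * η t * φ' t) t := by
        exact ((hη t ht).const_mul 2).mul (hφ1 t ht)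
      exact h1.mul (hφ2 t ht)
    have hN : HasDerivAt (fun s => 2 * ηbar * φ s ^ 2 * v s)
        ((2 * ηbar * (2 * φ t * φ' t)) * v t + (2 * ηbar * φ t ^ 2) * (-(ω ^ 2) * u t)) t := by
      have h2 : HasDerivAt (fun s => 2 * ηbar * φ s ^ 2) (2 * ηbar * (2 * φ t * φ' t)) t := by
        have := ((hφ1 t ht).pow 2).const_mul (2 * ηbar)
        refine this.congr_deriv ?_; ring
      exact h2.mul (hv t)
    have hB := hN.div (hu t) hu0
    have hAB := hA.sub hB
    refine hAB.congr_deriv ?_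
    rw [hFddef]
    rw [← h2ηγ, ← hω2]
    field_simp
    ring
  have hFd0 : ∀ t ∈ Ioo a b, 0 ≤ Fd t := by
    intro t ht
    have ht' : t ∈ Icc a b := Ioo_subset_Icc_self ht
    have t1 : 0 ≤ (2 * η t * φ'' t + 2 * η' t * φ' t - θ' t * φ t) * φ t :=
      mul_nonneg (hODE t ht') (hpos t ht)
    have t2 : 0 ≤ (θbar + θ' t) * φ t ^ 2 :=
      mul_nonneg (by linarith [hq t ht']) (sq_nonneg _)
    have t3 : 0 ≤ (2 * η t - 2 * ηbar) * φ' t ^ 2 :=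
      mul_nonneg (by linarith [hηlb t ht']) (sq_nonneg _)
    have t4 : 0 ≤ 2 * ηbar * (φ' t - φ t * (v t / u t)) ^ 2 :=
      mul_nonneg (by linarith) (sq_nonneg _)
    rw [hFddef]
    dsimp only
    linarith
  have hFcont : ContinuousOn F (Icc a b) := fun t ht =>
    (hF t ht).continuousAt.continuousWithinAt
  have hFmono : MonotoneOn F (Icc a b) := by
    apply monotoneOn_of_deriv_nonneg (convex_Icc a b) hFcont
    · rw [interior_Icc]
      exact fun t ht => ((hF t (Ioo_subset_Icc_self ht)).differentiableAt).differentiableWithinAt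
    · rw [interior_Icc]
      intro t ht
      rw [(hF t (Ioo_subset_Icc_self ht)).deriv]
      exact hFd0 t ht
  have hFa : F a = 0 := by rw [hFdef]; simp [hφa]
  have hFb : F b = 0 := by rw [hFdef]; simp [hφb]
  have hzero : ∀ t ∈ Icc a b, F t = 0 := by
    intro t ht
    have h1 := hFmono (left_mem_Icc.2 hab.le) ht ht.1
    have h2 := hFmono ht (right_mem_Icc.2 hab.le) ht.2
    linarith
  have hFdeq : ∀ t ∈ Ioo a b, Fd t = 0 := by
    intro t ht
    have hmem : Icc a b ∈ nhds t := Icc_mem_nhds ht.1 ht.2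
    have heq : (fun _ : ℝ => (0 : ℝ)) =ᶠ[nhds t] F :=
      Filter.eventuallyEq_of_mem hmem fun x hx => (hzero x hx).symm
    have h0 : HasDerivAt (fun _ : ℝ => (0 : ℝ)) (Fd t) t :=
      (hF t (Ioo_subset_Icc_self ht)).congr_of_eventuallyEq heq
    exact h0.unique (hasDerivAt_const t 0)
  have hkey : ∀ t ∈ Ioo a b, φ' t - φ t * (v t / u t) = 0 := by
    intro t ht
    have ht' : t ∈ Icc a b := Ioo_subset_Icc_self ht
    have t1 : 0 ≤ (2 * η t * φ'' t + 2 * η' t * φ' t - θ' t * φ t) * φ t :=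
      mul_nonneg (hODE t ht') (hpos t ht)
    have t2 : 0 ≤ (θbar + θ' t) * φ t ^ 2 :=
      mul_nonneg (by linarith [hq t ht']) (sq_nonneg _)
    have t3 : 0 ≤ (2 * η t - 2 * ηbar) * φ' t ^ 2 :=
      mul_nonneg (by linarith [hηlb t ht']) (sq_nonneg _)
    have hsum := hFdeq t ht
    rw [hFddef] at hsum
    dsimp only at hsum
    have t4 : 2 * ηbar * (φ' t - φ t * (v t / u t)) ^ 2 ≤ 0 := by linarith
    have := sq_nonneg (φ' t - φ t * (v t / u t))
    have hsq : (φ' t - φ t * (v t / u t)) ^ 2 = 0 := by nlinarith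
    exact pow_eq_zero_iff (two_ne_zero) |>.mp hsq
  set h : ℝ → ℝ := fun t => φ t / u t with hhdef
  have hh0 : ∀ t ∈ Ioo a b, HasDerivAt h 0 t := by
    intro t ht
    have ht' : t ∈ Icc a b := Ioo_subset_Icc_self ht
    have hu0 : u t ≠ 0 := (hupos t ht').ne'
    have := (hφ1 t ht').div (hu t) hu0
    refine this.congr_deriv ?_
    have hk := hkey t ht
    have : φ' t = φ t * (v t / u t) := by linarith
    rw [this]
    field_simp
    ring
  have hIcc : Icc t₀ b ⊆ Icc a b := Icc_subset_Icc ht₀.1.le le_rfl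
  have hcont : ContinuousOn h (Icc t₀ b) := by
    intro x hx
    have hx' : x ∈ Icc a b := hIcc hx
    exact ((hφ1 x hx').continuousAt.div (hu x).continuousAt (hupos x hx').ne').continuousWithinAt
  have hder : ∀ x ∈ Ico t₀ b, HasDerivWithinAt h 0 (Ici x) x := fun x hx =>
    (hh0 x ⟨lt_of_lt_of_le ht₀.1 hx.1, hx.2⟩).hasDerivWithinAt
  have hbt : h b = h t₀ :=
    constant_of_has_deriv_right_zero hcont hder b (right_mem_Icc.2 ht₀.2.le)
  have hb0 : h b = 0 := by rw [hhdef]; simp [hφb]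
  have ht₀0 : φ t₀ = 0 := by
    have : h t₀ = 0 := by rw [← hbt, hb0]
    rw [hhdef] at this
    dsimp only at this
    rcases div_eq_zero_iff.mp this with h1 | h2
    · exact h1
    · exact absurd h2 (hupos t₀ (Ioo_subset_Icc_self ht₀)).ne'
  linarith

open Set MeasureTheory Real in
theorem stmt18 (T Q : ℝ) (hT : 0 < T) (hQ : 0 < Q)
    (θ η θ' η' : ℝ → ℝ)
    (hθ : ∀ t ∈ Set.Icc 0 T, HasDerivAt θ (θ' t) t)
    (hθ'c : ContinuousOn θ' (Set.Icc 0 T))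
    (hη : ∀ t ∈ Set.Icc 0 T, HasDerivAt η (η' t) t)
    (hη'c : ContinuousOn η' (Set.Icc 0 T))
    (hηpos : ∀ t ∈ Set.Icc 0 T, 0 < η t)
    (hθ'nonpos : ∀ t ∈ Set.Icc 0 T, θ' t ≤ 0)
    (hη'nonpos : ∀ t ∈ Set.Icc 0 T, η' t ≤ 0)
    (ηbar θbar : ℝ)
    (hηbar : IsLeast (η '' Set.Icc 0 T) ηbar)
    (hθbar : 0 < θbar)
    (hθbar' : ∀ t ∈ Set.Icc 0 T, -θ' t ≤ θbar)
    (hγ : Real.sqrt (θbar / (2 * ηbar)) * T < Real.pi)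
    (ζ ζ' ζ'' : ℝ → ℝ)
    (hζ1 : ∀ t ∈ Set.Icc 0 T, HasDerivAt ζ (ζ' t) t)
    (hζ2 : ∀ t ∈ Set.Icc 0 T, HasDerivAt ζ' (ζ'' t) t)
    (hζ''c : ContinuousOn ζ'' (Set.Icc 0 T))
    (hODE : ∀ t ∈ Set.Icc 0 T, 2 * η t * ζ'' t + 2 * η' t * ζ' t - θ' t * ζ t = 0)
    (hζ0 : ζ 0 = Q) (hζT : ζ T = 0) :
    (∀ t ∈ Set.Icc 0 T, 0 ≤ ζ t) ∧
    (∀ t ∈ Set.Icc 0 T, ζ' t ≤ 0 → ζ'' t ≤ 0) ∧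
    (∀ t ∈ Set.Icc 0 T, Q * (1 - t / T) ≤ ζ t) := by
  -- basic facts
  have hηbarpos : 0 < ηbar := by
    obtain ⟨t, ht, hteq⟩ := hηbar.1
    rw [← hteq]; exact hηpos t ht
  have hηlb : ∀ t ∈ Set.Icc 0 T, ηbar ≤ η t := fun t ht => hηbar.2 ⟨t, ht, rfl⟩
  set g : ℝ → ℝ := fun t => ζ t - Q * (1 - t / T) with hgdef
  set gd : ℝ → ℝ := fun t => ζ' t + Q / T with hgddef
  have hg1 : ∀ t ∈ Set.Icc 0 T, HasDerivAt g (gd t) t := by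
    intro t ht
    have hL : HasDerivAt (fun s => Q * (1 - s / T)) (-(Q / T)) t := by
      have := (((hasDerivAt_id t).div_const T).const_sub 1).const_mul Q
      refine this.congr_deriv ?_; ring
    have := (hζ1 t ht).sub hL
    refine this.congr_deriv ?_; rw [hgddef]; ring
  have hg0 : g 0 = 0 := by rw [hgdef]; simp [hζ0]
  have hgT : g T = 0 := by
    rw [hgdef]; simp [hζT]
    simp [hT.ne']
  -- main claim: g ≥ 0 on [0,T]
  have key : ∀ t ∈ Set.Icc 0 T, 0 ≤ g t := by
    by_contra hcon
    push_neg at hcon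
    obtain ⟨t₀, ht₀mem, ht₀neg⟩ := hcon
    have hgcont : ContinuousOn g (Set.Icc 0 T) := fun x hx =>
      (hg1 x hx).continuousAt.continuousWithinAt
    have ht₀0 : (0:ℝ) < t₀ := by
      rcases ht₀mem.1.lt_or_eq with h | h
      · exact h
      · exfalso; rw [← h] at ht₀neg; linarith
    have ht₀T : t₀ < T := by
      rcases ht₀mem.2.lt_or_eq with h | h
      · exact h
      · exfalso; rw [h] at ht₀neg; linarith
    -- a : last zero before t₀
    set S₁ : Set ℝ := Set.Icc 0 t₀ ∩ g ⁻¹' {0} with hS₁def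
    have hS₁closed : IsClosed S₁ :=
      (hgcont.mono (Set.Icc_subset_Icc le_rfl ht₀T.le)).preimage_isClosed_of_isClosed
        isClosed_Icc isClosed_singleton
    have hS₁ne : S₁.Nonempty := ⟨0, ⟨le_refl 0, ht₀0.le⟩, hg0⟩
    have hS₁bdd : BddAbove S₁ := (bddAbove_Icc).mono Set.inter_subset_left
    set a : ℝ := sSup S₁ with hadef
    have haS : a ∈ S₁ := hS₁closed.csSup_mem hS₁ne hS₁bdd
    have hga : g a = 0 := haS.2
    have ha0 : 0 ≤ a := haS.1.1
    have hat₀ : a < t₀ := by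
      rcases haS.1.2.lt_or_eq with h | h
      · exact h
      · exfalso; rw [h] at hga; linarith
    have hneg₁ : ∀ s ∈ Set.Ioc a t₀, g s < 0 := by
      intro s hs
      by_contra hge
      push_neg at hge
      have hsT : s ≤ T := hs.2.trans ht₀T.le
      have hs0 : 0 ≤ s := ha0.trans hs.1.le
      have hsub : Set.Icc s t₀ ⊆ Set.Icc 0 T := Set.Icc_subset_Icc hs0 ht₀T.le
      have : (0:ℝ) ∈ Set.Icc (g t₀) (g s) := ⟨ht₀neg.le, hge⟩
      obtain ⟨z, hz, hz0⟩ := intermediate_value_Icc' hs.2 (hgcont.mono hsub) this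
      have hzS : z ∈ S₁ := ⟨⟨hs0.trans hz.1, hz.2⟩, hz0⟩
      have : z ≤ a := le_csSup hS₁bdd hzS
      linarith [hz.1, hs.1]
    -- b : first zero after t₀
    set S₂ : Set ℝ := Set.Icc t₀ T ∩ g ⁻¹' {0} with hS₂def
    have hS₂closed : IsClosed S₂ :=
      (hgcont.mono (Set.Icc_subset_Icc ht₀0.le le_rfl)).preimage_isClosed_of_isClosed
        isClosed_Icc isClosed_singleton
    have hS₂ne : S₂.Nonempty := ⟨T, ⟨ht₀T.le, le_refl T⟩, hgT⟩
    have hS₂bdd : BddBelow S₂ := (bddBelow_Icc).mono Set.inter_subset_left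
    set b : ℝ := sInf S₂ with hbdef
    have hbS : b ∈ S₂ := hS₂closed.csInf_mem hS₂ne hS₂bdd
    have hgb : g b = 0 := hbS.2
    have hbT : b ≤ T := hbS.1.2
    have ht₀b : t₀ < b := by
      rcases hbS.1.1.lt_or_eq with h | h
      · exact h
      · exfalso; rw [← h] at hgb; linarith
    have hneg₂ : ∀ s ∈ Set.Ico t₀ b, g s < 0 := by
      intro s hs
      by_contra hge
      push_neg at hge
      have hs0 : 0 ≤ s := ht₀0.le.trans hs.1
      have hsT : s ≤ T := (hs.2.le.trans hbT)
      have hsub : Set.Icc t₀ s ⊆ Set.Icc 0 T := Set.Icc_subset_Icc ht₀0.le hsT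
      have : (0:ℝ) ∈ Set.Icc (g t₀) (g s) := ⟨ht₀neg.le, hge⟩
      obtain ⟨z, hz, hz0⟩ := intermediate_value_Icc hs.1 (hgcont.mono hsub) this
      have hzS : z ∈ S₂ := ⟨⟨hz.1, (hz.2.trans hsT)⟩, hz0⟩
      have : b ≤ z := csInf_le hS₂bdd hzS
      linarith [hz.2, hs.2]
    -- assemble and apply picone_aux
    have hab : a < b := hat₀.trans ht₀b
    have hsubIcc : Set.Icc a b ⊆ Set.Icc 0 T := Set.Icc_subset_Icc ha0 hbT
    have hγab : Real.sqrt (θbar / (2 * ηbar)) * (b - a) < Real.pi := by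
      have hs := Real.sqrt_nonneg (θbar / (2 * ηbar))
      have : Real.sqrt (θbar / (2 * ηbar)) * (b - a) ≤ Real.sqrt (θbar / (2 * ηbar)) * T :=
        mul_le_mul_of_nonneg_left (by linarith) hs
      linarith
    have hgneg : ∀ t ∈ Set.Ioo a b, g t < 0 := by
      intro t ht
      rcases le_or_gt t t₀ with h | h
      · exact hneg₁ t ⟨ht.1, h⟩
      · exact hneg₂ t ⟨h.le, ht.2⟩
    refine picone_aux a b ηbar θbar t₀ hab hηbarpos hθbar hγab
      η η' θ' (fun t => -g t) (fun t => -gd t) (fun t => -ζ'' t)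
      (fun t ht => hη t (hsubIcc ht))
      (fun t ht => (hg1 t (hsubIcc ht)).neg)
      (fun t ht => ?_)
      (fun t ht => hηlb t (hsubIcc ht))
      (fun t ht => hθbar' t (hsubIcc ht))
      (fun t ht => ?_)
      (fun t ht => show (0:ℝ) ≤ -g t by linarith [hgneg t ht])
      ⟨hat₀, ht₀b⟩ (show (0:ℝ) < -g t₀ by linarith) (by simp [hga]) (by simp [hgb])
    · -- derivative of gd is ζ''
      have : HasDerivAt gd (ζ'' t) t := by
        rw [hgddef]
        simpa using (hζ2 t (hsubIcc ht)).add_const (Q / T)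
      exact this.neg
    · -- differential inequality
      have ht' := hsubIcc ht
      have h0 := hODE t ht'
      have h1 : η' t ≤ 0 := hη'nonpos t ht'
      have h2 : θ' t ≤ 0 := hθ'nonpos t ht'
      have hQT : 0 ≤ Q / T := (div_pos hQ hT).le
      have h1T : 0 ≤ 1 - t / T := by
        have : t / T ≤ 1 := (div_le_one hT).2 ht'.2
        linarith
      have e1 : 0 ≤ -η' t * (Q / T) := mul_nonneg (by linarith) hQT
      have e2 : 0 ≤ -θ' t * (Q * (1 - t / T)) :=
        mul_nonneg (by linarith) (mul_nonneg hQ.le h1T)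
      rw [hgdef, hgddef]
      dsimp only
      nlinarith [e1, e2, h0]
  -- conclude
  have claim3 : ∀ t ∈ Set.Icc 0 T, Q * (1 - t / T) ≤ ζ t := by
    intro t ht
    have := key t ht
    rw [hgdef] at this
    dsimp only at this
    linarith
  have hLnn : ∀ t ∈ Set.Icc 0 T, 0 ≤ Q * (1 - t / T) := by
    intro t ht
    have : t / T ≤ 1 := (div_le_one hT).2 ht.2
    exact mul_nonneg hQ.le (by linarith)
  have claim1 : ∀ t ∈ Set.Icc 0 T, 0 ≤ ζ t := fun t ht =>
    (hLnn t ht).trans (claim3 t ht)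
  refine ⟨claim1, ?_, claim3⟩
  intro t ht hζ'le
  have h0 := hODE t ht
  have h1 : η' t ≤ 0 := hη'nonpos t ht
  have h2 : θ' t ≤ 0 := hθ'nonpos t ht
  have h3 : 0 < η t := hηpos t ht
  have h4 : 0 ≤ ζ t := claim1 t ht
  nlinarith [mul_nonneg (neg_nonneg.2 h2) h4, mul_nonneg (neg_nonneg.2 h1) (neg_nonneg.2 hζ'le)]
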